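/- Existence of equilibria in finite zero-sum games (von Neumann): every finite two-player zero-sum game has a Nash equilibrium in mixed strategies, i.e. there exist mixed strategies p of player 1 and q of player 2 such that u(p', q) ≤ u(p, q) for every mixed strategy p' and u(p, q) ≤ u(p, q') for every mixed strategy q'. -/

import Mathlib

/-- A mixed strategy over a finite action set. -/
def IsMixed {I : Type*} [Fintype I] (p : I → ℝ) : Prop :=
  (∀ i, 0 ≤ p i) ∧ ∑ i, p i = 1

/-- Expected payoff to player 1 in the two-player zero-sum game with payoff matrix `A`. -/
def u {I J : Type*} [Fintype I] [Fintype J] (A : I → J → ℝ)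
    (p : I → ℝ) (q : J → ℝ) : ℝ :=
  ∑ i, ∑ j, p i * A i j * q j

/-- A Nash equilibrium in mixed strategies. -/
def IsNash {I J : Type*} [Fintype I] [Fintype J] (A : I → J → ℝ)
    (p : I → ℝ) (q : J → ℝ) : Prop :=
  IsMixed p ∧ IsMixed q ∧
    (∀ p' : I → ℝ, IsMixed p' → u A p' q ≤ u A p q) ∧
    (∀ q' : J → ℝ, IsMixed q' → u A p q ≤ u A p q')


open Finset

section VonNeumannAux

variable {I J : Type*} [Fintype I] [Fintype J]

/-- The alternative lemma: either player 2 can force payoff ≤ 0, or player 1 can force > 0. -/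
lemma vn_alternative [Nonempty I] [Nonempty J] (A : I → J → ℝ) :
    (∃ q ∈ stdSimplex ℝ J, ∀ i, ∑ j, A i j * q j ≤ 0) ∨
    (∃ p ∈ stdSimplex ℝ I, ∀ j, 0 < ∑ i, p i * A i j) := by
  classical
  set L : (J → ℝ) → (I → ℝ) := fun q i => ∑ j, A i j * q j with hLdef
  have hLlin : IsLinearMap ℝ L := by
    constructor
    · intro x y; funext i
      simp only [L, Pi.add_apply, mul_add, Finset.sum_add_distrib]
    · intro c x; funext i
      simp only [L, Pi.smul_apply, smul_eq_mul, Finset.mul_sum]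
      exact Finset.sum_congr rfl fun j _ => by ring
  have hLcont : Continuous L := by
    apply continuous_pi; intro i
    exact continuous_finset_sum _ fun j _ => continuous_const.mul (continuous_apply j)
  set C : Set (I → ℝ) := L '' stdSimplex ℝ J with hCdef
  set K : Set (I → ℝ) := {y | ∀ i, y i ≤ 0} with hKdef
  by_cases hCK : (C ∩ K).Nonempty
  · obtain ⟨y, ⟨q, hq, rfl⟩, hyK⟩ := hCK
    exact Or.inl ⟨q, hq, hyK⟩
  · right
    have hCconv : Convex ℝ C := (convex_stdSimplex ℝ J).is_linear_image hLlin
    have hCcomp : IsCompact C := (isCompact_stdSimplex ℝ J).image hLcont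
    have hKconv : Convex ℝ K := by
      intro x hx y hy a b ha hb _ i
      have h1 : a * x i ≤ 0 := mul_nonpos_of_nonneg_of_nonpos ha (hx i)
      have h2 : b * y i ≤ 0 := mul_nonpos_of_nonneg_of_nonpos hb (hy i)
      simpa using add_nonpos h1 h2
    have hKclosed : IsClosed K := by
      have : K = ⋂ i, (fun y : I → ℝ => y i) ⁻¹' Set.Iic 0 := by
        ext y; simp [hKdef, Set.mem_iInter]
      rw [this]
      exact isClosed_iInter fun i => isClosed_Iic.preimage (continuous_apply i)
    have hdisj : Disjoint C K := by
      rw [Set.disjoint_iff_inter_eq_empty]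
      exact Set.not_nonempty_iff_eq_empty.mp hCK
    obtain ⟨f, a, b, hfC, hab, hfK⟩ :=
      geometric_hahn_banach_compact_closed hCconv hCcomp hKconv hKclosed hdisj
    -- 0 ∈ K, so b < 0
    have h0K : (0 : I → ℝ) ∈ K := fun i => le_refl 0
    have hb0 : b < 0 := by simpa using hfK 0 h0K
    -- f (e i) ≤ 0 for all i
    have hfe : ∀ i : I, f (Pi.single i 1) ≤ 0 := by
      intro i
      by_contra h
      push_neg at h
      set t : ℝ := (|b| + 1) / f (Pi.single i 1) with htdef
      have ht : 0 < t := div_pos (by positivity) h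
      have hmem : (-t) • (Pi.single i 1 : I → ℝ) ∈ K := by
        intro i'
        simp only [Pi.smul_apply, smul_eq_mul]
        have : (0:ℝ) ≤ (Pi.single i 1 : I → ℝ) i' := by
          rcases eq_or_ne i' i with rfl | hne
          · simp
          · simp [Pi.single_apply, hne]
        nlinarith
      have := hfK _ hmem
      rw [map_smul] at this
      have hval : f (Pi.single i 1) * t = |b| + 1 := by
        rw [htdef]; field_simp
      simp only [smul_eq_mul] at this
      have h2 : -t * f (Pi.single i 1) = -(|b| + 1) := by
        rw [neg_mul, mul_comm, hval]
      have h3 : -|b| ≤ b := neg_abs_le b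
      linarith
    -- f x = ∑ i, x i * f (e i)
    have hfx : ∀ x : I → ℝ, f x = ∑ i, x i * f (Pi.single i 1) := by
      intro x
      have hx : x = ∑ i, x i • (Pi.single i 1 : I → ℝ) := by
        funext i'
        simp [Finset.sum_apply, Pi.single_apply]
      conv_lhs => rw [hx]
      rw [map_sum]
      exact Finset.sum_congr rfl fun i _ => by rw [map_smul]; simp
    set c : I → ℝ := fun i => -f (Pi.single i 1) with hcdef
    have hc0 : ∀ i, 0 ≤ c i := fun i => by simp [hcdef]; exact hfe i
    -- columns are in C, so f(col j) < a < b < 0, i.e. ∑ i c i * A i j > 0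
    have hcol : ∀ j, 0 < ∑ i, c i * A i j := by
      intro j
      have hmem : (fun i => A i j) ∈ C := by
        refine ⟨Pi.single j 1, single_mem_stdSimplex ℝ j, ?_⟩
        funext i
        simp [hLdef, Pi.single_apply, Finset.sum_ite_eq', mul_ite]
      have hlt : f (fun i => A i j) < 0 := lt_trans (lt_trans (hfC _ hmem) hab) hb0
      rw [hfx] at hlt
      have : ∑ i, c i * A i j = -∑ i, A i j * f (Pi.single i 1) := by
        rw [← Finset.sum_neg_distrib]
        exact Finset.sum_congr rfl fun i _ => by simp [hcdef]; ring
      rw [this]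
      linarith
  -- normalize c
    set s : ℝ := ∑ i, c i with hsdef
    have hs0 : 0 < s := by
      rcases lt_or_eq_of_le (Finset.sum_nonneg fun i _ => hc0 i) with h | h
      · exact h
      · exfalso
        have hz : ∀ i, c i = 0 := by
          intro i
          have := (Finset.sum_eq_zero_iff_of_nonneg (fun i _ => hc0 i)).mp h.symm
          exact this i (Finset.mem_univ i)
        obtain ⟨j⟩ := ‹Nonempty J›
        have := hcol j
        simp [hz] at this
    refine ⟨fun i => c i / s, ⟨fun i => div_nonneg (hc0 i) hs0.le, ?_⟩, ?_⟩
    · rw [← Finset.sum_div, ← hsdef, div_self hs0.ne']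
    · intro j
      have : ∑ i, c i / s * A i j = (∑ i, c i * A i j) / s := by
        rw [Finset.sum_div]
        exact Finset.sum_congr rfl fun i _ => by ring
      rw [this]
      exact div_pos (hcol j) hs0

end VonNeumannAux

open Finset

section VonNeumannAux2

lemma weight_sum_le {α : Type*} [Fintype α] {w : α → ℝ} (h0 : ∀ a, 0 ≤ w a)
    (h1 : ∑ a, w a = 1) {c : α → ℝ} {m : ℝ} (hc : ∀ a, c a ≤ m) :
    ∑ a, w a * c a ≤ m := by
  calc ∑ a, w a * c a ≤ ∑ a, w a * m :=
        Finset.sum_le_sum fun a _ => mul_le_mul_of_nonneg_left (hc a) (h0 a)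
    _ = m := by rw [← Finset.sum_mul, h1, one_mul]

lemma le_weight_sum {α : Type*} [Fintype α] {w : α → ℝ} (h0 : ∀ a, 0 ≤ w a)
    (h1 : ∑ a, w a = 1) {c : α → ℝ} {m : ℝ} (hc : ∀ a, m ≤ c a) :
    m ≤ ∑ a, c a * w a := by
  calc m = ∑ a, m * w a := by rw [← Finset.mul_sum, h1, mul_one]
    _ ≤ ∑ a, c a * w a :=
        Finset.sum_le_sum fun a _ => mul_le_mul_of_nonneg_right (hc a) (h0 a)

lemma u_eq_rows {I J : Type*} [Fintype I] [Fintype J] (A : I → J → ℝ) (p : I → ℝ) (q : J → ℝ) :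
    (∑ i, ∑ j, p i * A i j * q j) = ∑ i, p i * ∑ j, A i j * q j := by
  refine Finset.sum_congr rfl fun i _ => ?_
  rw [Finset.mul_sum]
  exact Finset.sum_congr rfl fun j _ => by ring

lemma u_eq_cols {I J : Type*} [Fintype I] [Fintype J] (A : I → J → ℝ) (p : I → ℝ) (q : J → ℝ) :
    (∑ i, ∑ j, p i * A i j * q j) = ∑ j, (∑ i, p i * A i j) * q j := by
  rw [Finset.sum_comm]
  refine Finset.sum_congr rfl fun j _ => ?_
  rw [Finset.sum_mul]

end VonNeumannAux2

theorem zero_sum_nash_exists' {I J : Type*} [Fintype I] [Fintype J]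
    [Nonempty I] [Nonempty J] (A : I → J → ℝ) :
    ∃ (p : I → ℝ) (q : J → ℝ), p ∈ stdSimplex ℝ I ∧ q ∈ stdSimplex ℝ J ∧
      (∀ p' : I → ℝ, p' ∈ stdSimplex ℝ I → (∑ i, ∑ j, p' i * A i j * q j) ≤ ∑ i, ∑ j, p i * A i j * q j) ∧
      (∀ q' : J → ℝ, q' ∈ stdSimplex ℝ J → (∑ i, ∑ j, p i * A i j * q j) ≤ ∑ i, ∑ j, p i * A i j * q' j) := by
  classical
  have hIne : (Finset.univ : Finset I).Nonempty := Finset.univ_nonempty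
  have hJne : (Finset.univ : Finset J).Nonempty := Finset.univ_nonempty
  set φ : (I → ℝ) → ℝ := fun p => Finset.univ.inf' hJne (fun j => ∑ i, p i * A i j) with hφdef
  set ψ : (J → ℝ) → ℝ := fun q => Finset.univ.sup' hIne (fun i => ∑ j, A i j * q j) with hψdef
  have hφc : Continuous φ := by
    rw [continuous_iff_continuousAt]
    intro x
    exact ContinuousAt.finset_inf'_apply hJne fun j _ =>
      (continuous_finset_sum _ fun i _ =>
        (continuous_apply i).mul continuous_const).continuousAt
  have hψc : Continuous ψ := by
    rw [continuous_iff_continuousAt]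
    intro x
    exact ContinuousAt.finset_sup'_apply hIne fun i _ =>
      (continuous_finset_sum _ fun j _ =>
        continuous_const.mul (continuous_apply j)).continuousAt
  have hIsne : (stdSimplex ℝ I).Nonempty :=
    ⟨Pi.single (Classical.arbitrary I) 1, single_mem_stdSimplex _ _⟩
  have hJsne : (stdSimplex ℝ J).Nonempty :=
    ⟨Pi.single (Classical.arbitrary J) 1, single_mem_stdSimplex _ _⟩
  obtain ⟨ps, hps, hpmax⟩ :=
    (isCompact_stdSimplex ℝ I).exists_isMaxOn hIsne hφc.continuousOn
  obtain ⟨qs, hqs, hqmin⟩ :=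
    (isCompact_stdSimplex ℝ J).exists_isMinOn hJsne hψc.continuousOn
  have hlb : ∀ j, φ ps ≤ ∑ i, ps i * A i j := fun j =>
    Finset.inf'_le (fun j => ∑ i, ps i * A i j) (Finset.mem_univ j)
  have hub : ∀ i, (∑ j, A i j * qs j) ≤ ψ qs := fun i =>
    Finset.le_sup' (fun i => ∑ j, A i j * qs j) (Finset.mem_univ i)
  -- v1 ≤ v2
  have h12 : φ ps ≤ ψ qs := by
    calc φ ps ≤ ∑ j, (∑ i, ps i * A i j) * qs j := le_weight_sum hqs.1 hqs.2 hlb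
      _ = ∑ i, ∑ j, ps i * A i j * qs j := (u_eq_cols A ps qs).symm
      _ = ∑ i, ps i * ∑ j, A i j * qs j := u_eq_rows A ps qs
      _ ≤ ψ qs := weight_sum_le hps.1 hps.2 hub
  -- v2 ≤ v1 via the alternative
  have h21 : ψ qs ≤ φ ps := by
    by_contra hlt
    push_neg at hlt
    set t : ℝ := (φ ps + ψ qs) / 2 with htdef
    have ht1 : φ ps < t := by rw [htdef]; linarith
    have ht2 : t < ψ qs := by rw [htdef]; linarith
    rcases vn_alternative (fun i j => A i j - t) with ⟨q, hq, hqle⟩ | ⟨p, hp, hplt⟩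
    · have hqt : ∀ i, ∑ j, A i j * q j ≤ t := by
        intro i
        have := hqle i
        have hrw : ∑ j, (A i j - t) * q j = (∑ j, A i j * q j) - t := by
          have : ∀ j, (A i j - t) * q j = A i j * q j - t * q j := fun j => by ring
          simp only [this, Finset.sum_sub_distrib, ← Finset.mul_sum, hq.2, mul_one]
        rw [hrw] at this
        linarith
      have : ψ q ≤ t := Finset.sup'_le _ _ fun i _ => hqt i
      have h2 : ψ qs ≤ ψ q := hqmin hq
      linarith
    · have hpt : ∀ j, t ≤ ∑ i, p i * A i j := by
        intro j
        have h := hplt j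
        have hrw : ∑ i, p i * (A i j - t) = (∑ i, p i * A i j) - t := by
          have : ∀ i, p i * (A i j - t) = p i * A i j - p i * t := fun i => by ring
          simp only [this, Finset.sum_sub_distrib, ← Finset.sum_mul, hp.2, one_mul]
        rw [hrw] at h
        linarith
      have : t ≤ φ p := Finset.le_inf' _ _ fun j _ => hpt j
      have h2 : φ p ≤ φ ps := hpmax hp
      linarith
  have hv : φ ps = ψ qs := le_antisymm h12 h21
  refine ⟨ps, qs, hps, hqs, ?_, ?_⟩
  · intro p' hp'
    calc (∑ i, ∑ j, p' i * A i j * qs j) = ∑ i, p' i * ∑ j, A i j * qs j :=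
          u_eq_rows A p' qs
      _ ≤ ψ qs := weight_sum_le hp'.1 hp'.2 hub
      _ = φ ps := hv.symm
      _ ≤ ∑ j, (∑ i, ps i * A i j) * qs j := le_weight_sum hqs.1 hqs.2 hlb
      _ = ∑ i, ∑ j, ps i * A i j * qs j := (u_eq_cols A ps qs).symm
  · intro q' hq'
    calc (∑ i, ∑ j, ps i * A i j * qs j) = ∑ i, ps i * ∑ j, A i j * qs j :=
          u_eq_rows A ps qs
      _ ≤ ψ qs := weight_sum_le hps.1 hps.2 hub
      _ = φ ps := hv.symm
      _ ≤ ∑ j, (∑ i, ps i * A i j) * q' j := le_weight_sum hq'.1 hq'.2 hlb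
      _ = ∑ i, ∑ j, ps i * A i j * q' j := (u_eq_cols A ps q').symm


theorem zero_sum_nash_exists {I J : Type*} [Fintype I] [Fintype J]
    [Nonempty I] [Nonempty J] (A : I → J → ℝ) :
    ∃ (p : I → ℝ) (q : J → ℝ), IsMixed p ∧ IsMixed q ∧
      (∀ p' : I → ℝ, IsMixed p' → u A p' q ≤ u A p q) ∧
      (∀ q' : J → ℝ, IsMixed q' → u A p q ≤ u A p q') := by
  obtain ⟨p, q, hp, hq, h1, h2⟩ := zero_sum_nash_exists' A
  exact ⟨p, q, hp, hq, fun p' hp' => h1 p' hp', fun q' hq' => h2 q' hq'⟩
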